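/- A digraph homomorphism ψ : G₁ → G₂ induces a chain map on ∂-invariant paths commuting with the boundary operator (ψ ∘ ∂ = ∂ ∘ ψ on elementary allowed paths), and hence induces homomorphisms ψ* : H_p(G₁) → H_p(G₂) on path homology; this assignment is functorial. -/

import Mathlib

/-- The space of paths on a vertex set `V` with coefficients in `K`: formal
`K`-linear combinations of elementary paths, an elementary `p`-path being encoded
as the list of its `p + 1` vertices. -/
abbrev PathSpace (K : Type*) [Field K] (V : Type*) := (List V) →₀ K

/-- The boundary operator `∂`, with `∂ e_{i₀…i_p} = Σ_q (-1)^q e_{i₀…î_q…i_p}`. -/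
noncomputable def bd (K : Type*) [Field K] (V : Type*) :
    PathSpace K V →ₗ[K] PathSpace K V :=
  Finsupp.lsum K fun l =>
    ∑ i ∈ Finset.range l.length, ((-1 : K) ^ i) • Finsupp.lsingle (l.eraseIdx i)

/-- The submodule `A_p` of allowed `p`-paths of the digraph `(V, E)`: spanned by
the elementary `p`-paths all of whose consecutive vertices are joined by an arc. -/
noncomputable def allowedPaths (K : Type*) [Field K] {V : Type*}
    (E : V → V → Prop) (p : ℕ) : Submodule K (PathSpace K V) :=
  Submodule.span K
    {x | ∃ l : List V, l.Chain' E ∧ l.length = p + 1 ∧ x = Finsupp.single l 1}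

/-- The submodule `Ω_p = {v ∈ A_p : ∂v ∈ A_{p-1}}` of `∂`-invariant paths
(with `Ω₀ = A₀`). -/
noncomputable def omegaPaths (K : Type*) [Field K] {V : Type*}
    (E : V → V → Prop) : ℕ → Submodule K (PathSpace K V)
  | 0 => allowedPaths K E 0
  | (p + 1) => allowedPaths K E (p + 1) ⊓ (allowedPaths K E p).comap (bd K V)

/-- The cycles in degree `p`: `Z_p = Ω_p ∩ ker ∂_p` (with `∂₀ = 0`). -/
noncomputable def cyclePaths (K : Type*) [Field K] {V : Type*}
    (E : V → V → Prop) : ℕ → Submodule K (PathSpace K V)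
  | 0 => omegaPaths K E 0
  | (p + 1) => omegaPaths K E (p + 1) ⊓ LinearMap.ker (bd K V)

/-- The boundaries in degree `p`: `B_p = ∂(Ω_{p+1})`. -/
noncomputable def boundaryPaths (K : Type*) [Field K] {V : Type*}
    (E : V → V → Prop) (p : ℕ) : Submodule K (PathSpace K V) :=
  Submodule.map (bd K V) (omegaPaths K E (p + 1))

/-- The path homology `H_p(G) = ker ∂_p / im ∂_{p+1}` of the digraph `(V, E)`:
the image of the cycles `Z_p` in the quotient of the path space by the
boundaries `B_p` (since `B_p ≤ Z_p`, this is `Z_p / B_p`). -/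
noncomputable def pathHomology (K : Type*) [Field K] {V : Type*}
    (E : V → V → Prop) (p : ℕ) : Type _ :=
  ↥((cyclePaths K E p).map (boundaryPaths K E p).mkQ)

/-- The class in `H_p(G)` of a cycle `z ∈ Z_p`. -/
noncomputable def homologyClass (K : Type*) [Field K] {V : Type*}
    (E : V → V → Prop) (p : ℕ) (z : ↥(cyclePaths K E p)) : pathHomology K E p :=
  ⟨(boundaryPaths K E p).mkQ z.1, Submodule.mem_map_of_mem z.2⟩

noncomputable instance pathHomology.instAddCommGroup (K : Type*) [Field K]
    {V : Type*} (E : V → V → Prop) (p : ℕ) : AddCommGroup (pathHomology K E p) :=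
  inferInstanceAs (AddCommGroup ↥((cyclePaths K E p).map (boundaryPaths K E p).mkQ))

noncomputable instance pathHomology.instModule (K : Type*) [Field K]
    {V : Type*} (E : V → V → Prop) (p : ℕ) : Module K (pathHomology K E p) :=
  inferInstanceAs (Module K ↥((cyclePaths K E p).map (boundaryPaths K E p).mkQ))

/-- A digraph homomorphism maps arcs to arcs. -/
def IsDigraphHom {V₁ V₂ : Type*} (E₁ : V₁ → V₁ → Prop) (E₂ : V₂ → V₂ → Prop)
    (ψ : V₁ → V₂) : Prop :=
  ∀ u v, E₁ u v → E₂ (ψ u) (ψ v)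

/-- The linear map on path spaces induced by a vertex map, sending an elementary
path to its image (with the same sign pattern). -/
noncomputable def mapPath (K : Type*) [Field K] {V₁ V₂ : Type*} (ψ : V₁ → V₂) :
    PathSpace K V₁ →ₗ[K] PathSpace K V₂ :=
  Finsupp.lsum K fun l => Finsupp.lsingle (l.map ψ)

/-- `f` is the map induced on `p`-th path homology by the vertex map `ψ`. -/
def IsInducedHom (K : Type*) [Field K] {V₁ V₂ : Type*} (E₁ : V₁ → V₁ → Prop)
    (E₂ : V₂ → V₂ → Prop) (p : ℕ) (ψ : V₁ → V₂)
    (f : pathHomology K E₁ p →ₗ[K] pathHomology K E₂ p) : Prop :=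
  ∀ (z : ↥(cyclePaths K E₁ p)) (h : mapPath K ψ z.1 ∈ cyclePaths K E₂ p),
    f (homologyClass K E₁ p z) = homologyClass K E₂ p ⟨mapPath K ψ z.1, h⟩


section Aux

variable (K : Type*) [Field K]

lemma List.eraseIdx_map' {α β : Type*} (f : α → β) (l : List α) :
    ∀ i : ℕ, (l.map f).eraseIdx i = (l.eraseIdx i).map f := by
  induction l with
  | nil => intro i; simp
  | cons a t ih => intro i; cases i <;> simp [List.eraseIdx, ih]

lemma mapPath_single {V₁ V₂ : Type*} (ψ : V₁ → V₂) (l : List V₁) (a : K) :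
    mapPath K ψ (Finsupp.single l a) = Finsupp.single (l.map ψ) a := by
  simp [mapPath]

lemma bd_single {V : Type*} (l : List V) (a : K) :
    bd K V (Finsupp.single l a) =
      ∑ i ∈ Finset.range l.length, ((-1 : K) ^ i) • Finsupp.single (l.eraseIdx i) a := by
  simp [bd]

lemma mapPath_comp_bd {V₁ V₂ : Type*} (ψ : V₁ → V₂) :
    (mapPath K ψ).comp (bd K V₁) = (bd K V₂).comp (mapPath K ψ) := by
  apply Finsupp.lhom_ext
  intro l a
  simp only [LinearMap.comp_apply, bd_single, mapPath_single, map_sum, map_smul,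
    List.length_map, List.eraseIdx_map']

lemma mapPath_bd {V₁ V₂ : Type*} (ψ : V₁ → V₂) (x : PathSpace K V₁) :
    mapPath K ψ (bd K V₁ x) = bd K V₂ (mapPath K ψ x) :=
  congrFun (congrArg (fun f => f.toFun) (mapPath_comp_bd K ψ)) x

variable {V₁ V₂ V₃ : Type*} {E₁ : V₁ → V₁ → Prop} {E₂ : V₂ → V₂ → Prop}
  {ψ : V₁ → V₂}

lemma mapPath_allowed (hψ : IsDigraphHom E₁ E₂ ψ) (q : ℕ) :
    ∀ x ∈ allowedPaths K E₁ q, mapPath K ψ x ∈ allowedPaths K E₂ q := by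
  intro x hx
  have : (allowedPaths K E₁ q).map (mapPath K ψ) ≤ allowedPaths K E₂ q := by
    rw [allowedPaths, Submodule.map_span, Submodule.span_le]
    rintro _ ⟨y, ⟨l, hc, hl, rfl⟩, rfl⟩
    exact Submodule.subset_span
      ⟨l.map ψ, List.isChain_map_of_isChain ψ (fun a b hab => hψ a b hab) hc, by simp [hl], by simp [mapPath_single]⟩
  exact this (Submodule.mem_map_of_mem hx)

lemma mapPath_omega (hψ : IsDigraphHom E₁ E₂ ψ) (q : ℕ) :
    ∀ x ∈ omegaPaths K E₁ q, mapPath K ψ x ∈ omegaPaths K E₂ q := by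
  intro x hx
  cases q with
  | zero => exact mapPath_allowed K hψ 0 x hx
  | succ q =>
    obtain ⟨h1, h2⟩ := hx
    refine ⟨mapPath_allowed K hψ _ x h1, ?_⟩
    show bd K V₂ (mapPath K ψ x) ∈ allowedPaths K E₂ q
    rw [← mapPath_bd]
    exact mapPath_allowed K hψ q _ h2

lemma mapPath_cycle (hψ : IsDigraphHom E₁ E₂ ψ) (q : ℕ) :
    ∀ x ∈ cyclePaths K E₁ q, mapPath K ψ x ∈ cyclePaths K E₂ q := by
  intro x hx
  cases q with
  | zero => exact mapPath_omega K hψ 0 x hx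
  | succ q =>
    obtain ⟨h1, h2⟩ := hx
    refine ⟨mapPath_omega K hψ _ x h1, ?_⟩
    show bd K V₂ (mapPath K ψ x) = 0
    rw [← mapPath_bd, LinearMap.mem_ker.mp h2, map_zero]

lemma mapPath_boundary (hψ : IsDigraphHom E₁ E₂ ψ) (q : ℕ) :
    ∀ x ∈ boundaryPaths K E₁ q, mapPath K ψ x ∈ boundaryPaths K E₂ q := by
  rintro _ ⟨y, hy, rfl⟩
  exact ⟨mapPath K ψ y, mapPath_omega K hψ _ y hy, (mapPath_bd K ψ y).symm⟩

/-- Every element of path homology is a class of a cycle. -/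
lemma pathHomology_exists_rep {V : Type*} {E : V → V → Prop} (q : ℕ)
    (x : pathHomology K E q) :
    ∃ z : ↥(cyclePaths K E q), homologyClass K E q z = x := by
  obtain ⟨y, hy⟩ := x
  obtain ⟨z, hz, hzy⟩ := hy
  exact ⟨⟨z, hz⟩, Subtype.ext hzy⟩

/-- The induced linear map on path homology. -/
noncomputable def inducedHom (hψ : IsDigraphHom E₁ E₂ ψ) (q : ℕ) :
    pathHomology K E₁ q →ₗ[K] pathHomology K E₂ q :=
  LinearMap.restrict
    (Submodule.mapQ (boundaryPaths K E₁ q) (boundaryPaths K E₂ q) (mapPath K ψ)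
      (fun x hx => mapPath_boundary K hψ q x hx))
    (by
      rintro _ ⟨z, hz, rfl⟩
      refine ⟨mapPath K ψ z, mapPath_cycle K hψ _ z hz, ?_⟩
      rw [Submodule.mkQ_apply, Submodule.mkQ_apply, Submodule.mapQ_apply])

lemma inducedHom_isInduced (hψ : IsDigraphHom E₁ E₂ ψ) (q : ℕ) : IsInducedHom K E₁ E₂ q ψ (inducedHom K hψ q) := by
  intro z h
  apply Subtype.ext
  show Submodule.mapQ (boundaryPaths K E₁ q) (boundaryPaths K E₂ q) (mapPath K ψ)
      (fun x hx => mapPath_boundary K hψ q x hx)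
      ((boundaryPaths K E₁ q).mkQ z.1) = (boundaryPaths K E₂ q).mkQ (mapPath K ψ z.1)
  rw [Submodule.mkQ_apply, Submodule.mapQ_apply, Submodule.mkQ_apply]

lemma isInducedHom_ext {V₁' V₂' : Type*} {E₁' : V₁' → V₁' → Prop}
    {E₂' : V₂' → V₂' → Prop} {ψ' : V₁' → V₂'} (q : ℕ)
    {f g : pathHomology K E₁' q →ₗ[K] pathHomology K E₂' q}
    (hf : IsInducedHom K E₁' E₂' q ψ' f) (hg : IsInducedHom K E₁' E₂' q ψ' g)
    (hc : ∀ x ∈ cyclePaths K E₁' q, mapPath K ψ' x ∈ cyclePaths K E₂' q) :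
    f = g := by
  apply LinearMap.ext
  intro x
  obtain ⟨z, rfl⟩ := pathHomology_exists_rep K q x
  rw [hf z (hc z.1 z.2), hg z (hc z.1 z.2)]

lemma mapPath_comp (χ : V₂ → V₃) :
    mapPath K (χ ∘ ψ) = (mapPath K χ).comp (mapPath K ψ) := by
  apply Finsupp.lhom_ext
  intro l a
  simp [mapPath_single, List.map_map]

lemma mapPath_id {V : Type*} : mapPath K (id : V → V) = LinearMap.id := by
  apply Finsupp.lhom_ext
  intro l a
  simp [mapPath_single]

end Aux

/-- a digraph homomorphism `ψ : G₁ → G₂` commutes with the boundary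
operator on elementary allowed paths, maps cycles to cycles and boundaries to
boundaries, hence induces a (unique) homomorphism `ψ* : H_p(G₁) → H_p(G₂)` on path
homology; moreover this assignment is functorial: it respects composition and
sends identities to identities. -/
theorem pathHomology_functorial (K : Type*) [Field K] {V₁ V₂ V₃ : Type*}
    (E₁ : V₁ → V₁ → Prop) (E₂ : V₂ → V₂ → Prop) (E₃ : V₃ → V₃ → Prop)
    (p : ℕ) (ψ : V₁ → V₂) (hψ : IsDigraphHom E₁ E₂ ψ) :
    (∀ l : List V₁, l.Chain' E₁ →
      mapPath K ψ (bd K V₁ (Finsupp.single l 1)) =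
        bd K V₂ (mapPath K ψ (Finsupp.single l 1))) ∧
    (∀ x ∈ cyclePaths K E₁ p, mapPath K ψ x ∈ cyclePaths K E₂ p) ∧
    (∀ x ∈ boundaryPaths K E₁ p, mapPath K ψ x ∈ boundaryPaths K E₂ p) ∧
    (∃! f : pathHomology K E₁ p →ₗ[K] pathHomology K E₂ p,
      IsInducedHom K E₁ E₂ p ψ f) ∧
    (∀ (χ : V₂ → V₃), IsDigraphHom E₂ E₃ χ →
      ∀ (f : pathHomology K E₁ p →ₗ[K] pathHomology K E₂ p)
        (g : pathHomology K E₂ p →ₗ[K] pathHomology K E₃ p)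
        (h : pathHomology K E₁ p →ₗ[K] pathHomology K E₃ p),
        IsInducedHom K E₁ E₂ p ψ f → IsInducedHom K E₂ E₃ p χ g →
        IsInducedHom K E₁ E₃ p (χ ∘ ψ) h → h = g.comp f) ∧
    (∀ f : pathHomology K E₁ p →ₗ[K] pathHomology K E₁ p,
      IsInducedHom K E₁ E₁ p id f → f = LinearMap.id) := by
  refine ⟨fun l _ => mapPath_bd K ψ _, mapPath_cycle K hψ p, mapPath_boundary K hψ p,
    ⟨inducedHom K hψ p, inducedHom_isInduced K hψ p,
      fun g hg => isInducedHom_ext K p hg (inducedHom_isInduced K hψ p)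
        (mapPath_cycle K hψ p)⟩, ?_, ?_⟩
  · intro χ hχ f g h hf hg hh
    have hcomp : IsDigraphHom E₁ E₃ (χ ∘ ψ) := fun u v huv => hχ _ _ (hψ _ _ huv)
    have hgf : IsInducedHom K E₁ E₃ p (χ ∘ ψ) (g.comp f) := by
      intro z hz
      have h₂ : mapPath K ψ z.1 ∈ cyclePaths K E₂ p := mapPath_cycle K hψ p z.1 z.2
      have h₃ : mapPath K χ (mapPath K ψ z.1) ∈ cyclePaths K E₃ p :=
        mapPath_cycle K hχ p _ h₂
      rw [LinearMap.comp_apply, hf z h₂, hg ⟨mapPath K ψ z.1, h₂⟩ h₃]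
      have heq : mapPath K χ (mapPath K ψ z.1) = mapPath K (χ ∘ ψ) z.1 := by
        rw [mapPath_comp K χ]; rfl
      apply Subtype.ext
      show (boundaryPaths K E₃ p).mkQ (mapPath K χ (mapPath K ψ z.1)) =
        (boundaryPaths K E₃ p).mkQ (mapPath K (χ ∘ ψ) z.1)
      rw [heq]
    exact isInducedHom_ext K p hh hgf (mapPath_cycle K hcomp p)
  · intro f hf
    have hid : IsInducedHom K E₁ E₁ p (id : V₁ → V₁) LinearMap.id := by
      intro z hz
      have heq : mapPath K (id : V₁ → V₁) z.1 = z.1 := by rw [mapPath_id K]; rfl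
      apply Subtype.ext
      show (boundaryPaths K E₁ p).mkQ z.1 =
        (boundaryPaths K E₁ p).mkQ (mapPath K (id : V₁ → V₁) z.1)
      rw [heq]
    exact isInducedHom_ext K p hf hid
      (fun x hx => by rw [mapPath_id K]; exact hx)
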